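/- Let {φ_j}_{j=1}^t be vectors in ℝ^d satisfying ‖φ_j‖ ≤ 1 for all j. Let Λ_0 be a positive definite d × d matrix whose smallest eigenvalue satisfies λ_min(Λ_0) ≥ 1, and for j ≥ 1 define Λ_j = Λ_0 + Σ_{i=1}^j φ_i φ_iᵀ. Then log(det(Λ_t) / det(Λ_0)) ≤ Σ_{j=1}^t φ_jᵀ (Λ_{j-1})⁻¹ φ_j ≤ 2 * log(det(Λ_t) / det(Λ_0)). -/

import Mathlib

open Matrix in
private lemma elliptical_aux_log (x : ℝ) (h0 : 0 ≤ x) (h1 : x ≤ 1) :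
    x ≤ 2 * Real.log (1 + x) := by
  have hpos : (0:ℝ) < 1 + x := by linarith
  have h2 : 1 - (1 + x)⁻¹ ≤ Real.log (1 + x) :=
    Real.one_sub_inv_le_log_of_pos hpos
  have h3 : 1 - (1 + x)⁻¹ = x / (1 + x) := by field_simp; ring
  have h4 : x / (1 + x) ≤ Real.log (1 + x) := h3 ▸ h2
  have h5 : x ≤ Real.log (1 + x) * (1 + x) := (div_le_iff₀ hpos).mp h4
  have h6 : 0 ≤ Real.log (1 + x) := Real.log_nonneg (by linarith)
  nlinarith

open Matrix in
theorem elliptical_potential (d t : ℕ) (φ : ℕ → EuclideanSpace ℝ (Fin d))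
    (hφ : ∀ j, ‖φ j‖ ≤ 1)
    (Λ0 : Matrix (Fin d) (Fin d) ℝ) (hΛ0 : Λ0.PosDef)
    (hmin : ∀ i, 1 ≤ hΛ0.isHermitian.eigenvalues i)
    (Λ : ℕ → Matrix (Fin d) (Fin d) ℝ)
    (hΛ : ∀ j, Λ j = Λ0 + ∑ i ∈ Finset.range j, vecMulVec (φ i) (φ i)) :
    Real.log ((Λ t).det / Λ0.det) ≤ ∑ j ∈ Finset.range t, φ j ⬝ᵥ ((Λ j)⁻¹ *ᵥ φ j) ∧
      ∑ j ∈ Finset.range t, φ j ⬝ᵥ ((Λ j)⁻¹ *ᵥ φ j)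
        ≤ 2 * Real.log ((Λ t).det / Λ0.det) := by
  set x : ℕ → ℝ := fun j => φ j ⬝ᵥ ((Λ j)⁻¹ *ᵥ φ j) with hxdef
  -- each vecMulVec is PSD
  have hvv : ∀ i, (vecMulVec (φ i) (φ i) : Matrix (Fin d) (Fin d) ℝ).PosSemidef := by
    intro i
    rw [vecMulVec_eq (Fin 1)]
    have : (replicateRow (Fin 1) (φ i) : Matrix (Fin 1) (Fin d) ℝ)
        = (replicateCol (Fin 1) (φ i) : Matrix (Fin d) (Fin 1) ℝ)ᴴ := by
      ext a b
      simp [Matrix.replicateRow, Matrix.replicateCol, Matrix.conjTranspose_apply]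
    rw [this]
    exact Matrix.posSemidef_self_mul_conjTranspose _
  have hPSDsum : ∀ j, ((∑ i ∈ Finset.range j, vecMulVec (φ i) (φ i)) :
      Matrix (Fin d) (Fin d) ℝ).PosSemidef := by
    intro j
    induction j with
    | zero => simpa using Matrix.PosSemidef.zero
    | succ n ih =>
      rw [Finset.sum_range_succ]
      exact ih.add (hvv n)
  have hPD : ∀ j, (Λ j).PosDef := by
    intro j
    rw [hΛ j]
    exact hΛ0.add_posSemidef (hPSDsum j)
  -- Λ0 - 1 is PSD
  have hsub1 : (Λ0 - 1 : Matrix (Fin d) (Fin d) ℝ).PosSemidef := by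
    have hH := hΛ0.isHermitian
    have hspec := hH.spectral_theorem
    set U : Matrix (Fin d) (Fin d) ℝ := (Matrix.IsHermitian.eigenvectorUnitary hH :
      Matrix (Fin d) (Fin d) ℝ) with hUdef
    have hUmem := (Matrix.IsHermitian.eigenvectorUnitary hH).2
    have hU1 : U * star U = 1 := hUmem.2
    have hdiag : (diagonal (RCLike.ofReal ∘ hH.eigenvalues) : Matrix (Fin d) (Fin d) ℝ)
        = diagonal hH.eigenvalues := by
      congr 1
    have hkey : Λ0 - 1 = U * diagonal (fun i => hH.eigenvalues i - 1) * star U := by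
      have : (diagonal (fun i => hH.eigenvalues i - 1) : Matrix (Fin d) (Fin d) ℝ)
          = diagonal hH.eigenvalues - 1 := by
        rw [← Matrix.diagonal_one, Matrix.diagonal_sub]
      rw [this, Matrix.mul_sub, Matrix.mul_one, Matrix.sub_mul, hU1]
      nth_rewrite 1 [hspec]
      rw [hdiag, Unitary.conjStarAlgAut_apply]
    rw [hkey, Matrix.star_eq_conjTranspose]
    have hd : (0 : Fin d → ℝ) ≤ fun i => hH.eigenvalues i - 1 := by
      intro i; simp only [Pi.zero_apply]; linarith [hmin i]
    exact (Matrix.PosSemidef.diagonal hd).mul_mul_conjTranspose_same U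
  have hsubj : ∀ j, (Λ j - 1 : Matrix (Fin d) (Fin d) ℝ).PosSemidef := by
    intro j
    have : Λ j - 1 = (Λ0 - 1) + ∑ i ∈ Finset.range j, vecMulVec (φ i) (φ i) := by
      rw [hΛ j]; abel
    rw [this]
    exact hsub1.add (hPSDsum j)
  -- nonnegativity of x j
  have hx0 : ∀ j, 0 ≤ x j := by
    intro j
    have := ((hPD j).inv.posSemidef).dotProduct_mulVec_nonneg (φ j)
    simpa using this
  -- x j ≤ 1
  have hx1 : ∀ j, x j ≤ 1 := by
    intro j
    have hPDj := hPD j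
    set y : Fin d → ℝ := (Λ j)⁻¹ *ᵥ (φ j) with hy
    have hAy : (Λ j) *ᵥ y = φ j := by
      rw [hy, Matrix.mulVec_mulVec, Matrix.mul_nonsing_inv _ (isUnit_iff_ne_zero.mpr hPDj.det_pos.ne'),
        Matrix.one_mulVec]
    have hyy0 : 0 ≤ y ⬝ᵥ y := Finset.sum_nonneg fun i _ => mul_self_nonneg _
    have hyy : y ⬝ᵥ y ≤ x j := by
      have h := (hsubj j).dotProduct_mulVec_nonneg y
      rw [Matrix.sub_mulVec, Matrix.one_mulVec, hAy] at h
      simp only [star_trivial, dotProduct_sub] at h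
      have hcomm : y ⬝ᵥ (φ j : Fin d → ℝ) = x j := by
        rw [hxdef]; exact dotProduct_comm _ _
      linarith [h, hcomm]
    have hφφ : ((φ j : Fin d → ℝ)) ⬝ᵥ (φ j) ≤ 1 := by
      have h1 := hφ j
      have h2 : ((φ j : Fin d → ℝ)) ⬝ᵥ (φ j) = ‖φ j‖ ^ 2 := by
        rw [EuclideanSpace.norm_eq, Real.sq_sqrt (Finset.sum_nonneg fun i _ => sq_nonneg _)]
        simp [dotProduct, Real.norm_eq_abs, sq_abs, pow_two]
      rw [h2]
      nlinarith [norm_nonneg (φ j)]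
    have hCS : (x j) ^ 2 ≤ (((φ j : Fin d → ℝ)) ⬝ᵥ (φ j)) * (y ⬝ᵥ y) := by
      have := Finset.sum_mul_sq_le_sq_mul_sq Finset.univ ((φ j : Fin d → ℝ)) y
      simpa [show x j = (φ j : Fin d → ℝ) ⬝ᵥ y from rfl, dotProduct, pow_two] using this
    nlinarith [hx0 j]
  -- determinant recursion
  have hdet : ∀ j, (Λ (j+1)).det = (Λ j).det * (1 + x j) := by
    intro j
    have hstep : Λ (j+1) = Λ j + vecMulVec (φ j) (φ j) := by
      rw [hΛ, hΛ, Finset.sum_range_succ, add_assoc]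
    rw [hstep, vecMulVec_eq (Fin 1),
      Matrix.det_add_replicateCol_mul_replicateRow (isUnit_iff_ne_zero.mpr (hPD j).det_pos.ne')]
    congr 1
    simp only [Matrix.det_unique, Matrix.add_apply, Matrix.one_apply_eq]
    congr 1
    rw [← Matrix.replicateRow_vecMul, Matrix.replicateRow_mul_replicateCol_apply]
    simp only [hxdef]
    exact (dotProduct_mulVec _ _ _).symm
  -- determinant product formula
  have hdetprod : ∀ n, (Λ n).det = Λ0.det * ∏ j ∈ Finset.range n, (1 + x j) := by
    intro n
    induction n with
    | zero => simp [hΛ 0]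
    | succ n ih => rw [hdet n, ih, Finset.prod_range_succ, mul_assoc]
  have hdet0 : Λ0.det ≠ 0 := hΛ0.det_pos.ne'
  have hlog : Real.log ((Λ t).det / Λ0.det)
      = ∑ j ∈ Finset.range t, Real.log (1 + x j) := by
    rw [hdetprod t, mul_comm, mul_div_assoc, div_self hdet0, mul_one,
      Real.log_prod (fun j _ => by have := hx0 j; positivity)]
  constructor
  · rw [hlog]
    apply Finset.sum_le_sum
    intro j _
    have h := Real.log_le_sub_one_of_pos (show (0:ℝ) < 1 + x j by linarith [hx0 j])
    linarith
  · rw [hlog, Finset.mul_sum]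
    apply Finset.sum_le_sum
    intro j _
    exact elliptical_aux_log (x j) (hx0 j) (hx1 j)
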